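/- If y ∈ S_∞ is a Grassmannian involution with y(1) = k+1 > 1, then the Rothe diagram of y equals the full square [k] × [k], and hence y = g_k. -/

import Mathlib

/-- The underlying function of the Grassmannian involution `g_k` shifted by `m`
(0-indexed). -/
def gfun (m k : ℕ) : ℕ → ℕ := fun x =>
  if x < m then x
  else if x < m + k then x + k
  else if x < m + 2 * k then x - k
  else x

/-- The Rothe diagram of `w ∈ S_∞` (0-indexed):
`D(w) = {(i,j) : j < w(i) and i < w⁻¹(j)}`. -/
def rotheN (w : Equiv.Perm ℕ) : Set (ℕ × ℕ) :=
  {p | p.2 < w p.1 ∧ p.1 < w⁻¹ p.2}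

/-- If `y ∈ S_∞` is a Grassmannian involution with `y(1) = k+1 > 1` (0-indexed:
`y(0) = k > 0`), then the Rothe diagram of `y` is the full square `[k] × [k]`,
and hence `y = g_k`. -/
theorem stmt10 (y : Equiv.Perm ℕ) (hy : y * y = 1)
    (hfin : Set.Finite {x | y x ≠ x})
    (hgr : ∀ i j : ℕ, y (i + 1) < y i → y (j + 1) < y j → i = j)
    (k : ℕ) (hk : 0 < k) (hy0 : y 0 = k) :
    rotheN y = {p : ℕ × ℕ | p.1 < k ∧ p.2 < k} ∧ (∀ x, y x = gfun 0 k x) := by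
  have hinv : ∀ x, y (y x) = x := by
    intro x
    have h := Equiv.ext_iff.mp hy x
    simpa [Equiv.Perm.mul_apply] using h
  have yk : y k = 0 := by
    have := hinv 0
    rw [hy0] at this
    exact this
  -- existence of a descent in any decreasing interval
  have exd : ∀ b a, a < b → y b < y a → ∃ d, a ≤ d ∧ d < b ∧ y (d + 1) < y d := by
    intro b
    induction b with
    | zero => omega
    | succ n ih =>
      intro a hab hlt
      by_cases h : y (n + 1) < y n
      · exact ⟨n, by omega, by omega, h⟩
      · rcases Nat.lt_or_ge a n with h' | h'
        · have h2 : y n < y a := by omega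
          obtain ⟨d, hd1, hd2, hd3⟩ := ih a h' h2
          exact ⟨d, hd1, by omega, hd3⟩
        · have : a = n := by omega
          subst this
          omega
  obtain ⟨d0, hd01, hd02, hd03⟩ := exd k 0 hk (by rw [yk, hy0]; exact hk)
  have hd : ∀ i, y (i + 1) < y i → i = d0 := fun i h => hgr i d0 h hd03
  have asc : ∀ i, i ≠ d0 → y i < y (i + 1) := by
    intro i hi
    rcases lt_trichotomy (y i) (y (i + 1)) with h | h | h
    · exact h
    · exact absurd (y.injective h) (by omega)
    · exact absurd (hd i h) hi
  have smono : ∀ j i, i < j → (∀ t, i ≤ t → t < j → t ≠ d0) → y i < y j := by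
    intro j
    induction j with
    | zero => omega
    | succ n ih =>
      intro i hij ht
      have hn : y n < y (n + 1) := asc n (ht n (by omega) (by omega))
      rcases Nat.lt_or_ge i n with h | h
      · exact lt_trans (ih i h (fun t h1 h2 => ht t h1 (by omega))) hn
      · have : i = n := by omega
        subst this; exact hn
  have hdk : d0 + 1 = k := by
    by_contra h
    have h2 : d0 + 1 < k := by omega
    have h3 := smono k (d0 + 1) h2 (fun t h1 h2 => by omega)
    rw [yk] at h3
    omega
  have inc_low : ∀ i j, i < j → j < k → y i < y j := by
    intro i j h1 h2
    exact smono j i h1 (fun t ht1 ht2 => by omega)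
  have inc_high : ∀ i j, k ≤ i → i < j → y i < y j := by
    intro i j h1 h2
    exact smono j i h2 (fun t ht1 ht2 => by omega)
  have low_ge : ∀ i, i < k → k + i ≤ y i := by
    intro i
    induction i with
    | zero => intro _; rw [hy0]; omega
    | succ n ih =>
      intro h
      have h1 := ih (by omega)
      have h2 := inc_low n (n + 1) (by omega) h
      omega
  have high_ge : ∀ j, j ≤ y (k + j) := by
    intro j
    induction j with
    | zero => exact Nat.zero_le _
    | succ n ih =>
      have h2 : y (k + n) < y (k + (n + 1)) := inc_high (k + n) (k + (n + 1)) (by omega) (by omega)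
      omega
  have main1 : ∀ j, j < k → y (k + j) = j := by
    intro j
    induction j using Nat.strong_induction_on with
    | _ j ih =>
      intro hj
      have hmj : y (y j) = j := hinv j
      have hmk : k ≤ y j := by
        by_contra h
        have h1 := low_ge (y j) (by omega)
        rw [hmj] at h1
        omega
      have hmle : y j ≤ k + j := by
        by_contra h
        have h1 := inc_high (k + j) (y j) (by omega) (by omega)
        have h2 := high_ge j
        rw [hmj] at h1
        omega
      rcases Nat.lt_or_ge (y j) (k + j) with h | h
      · exfalso
        have h1 := ih (y j - k) (by omega) (by omega)
        rw [show k + (y j - k) = y j by omega] at h1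
        rw [hmj] at h1
        omega
      · rw [show k + j = y j by omega]
        exact hmj
  have main2 : ∀ j, j < k → y j = k + j := by
    intro j hj
    have h1 := hinv (k + j)
    rw [main1 j hj] at h1
    rw [h1]
  have ge2k : ∀ x, 2 * k ≤ x → 2 * k ≤ y x := by
    intro x hx
    by_contra h
    rcases Nat.lt_or_ge (y x) k with h1 | h1
    · have h2 := main2 (y x) h1
      rw [hinv] at h2
      omega
    · have h2 := main1 (y x - k) (by omega)
      rw [show k + (y x - k) = y x by omega, hinv] at h2
      omega
  have gex : ∀ x, 2 * k ≤ x → x ≤ y x := by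
    intro x hx
    induction x, hx using Nat.le_induction with
    | base => exact ge2k (2 * k) le_rfl
    | succ n hn ih =>
      have := inc_high n (n + 1) (by omega) (by omega)
      omega
  have fix : ∀ x, 2 * k ≤ x → y x = x := by
    intro x hx
    have h1 := gex x hx
    have h2 := gex (y x) (ge2k x hx)
    rw [hinv] at h2
    omega
  have hfun : ∀ x, y x = gfun 0 k x := by
    intro x
    unfold gfun
    rcases Nat.lt_or_ge x k with h | h
    · rw [main2 x h]
      split_ifs <;> omega
    · rcases Nat.lt_or_ge x (2 * k) with h2 | h2
      · have h3 := main1 (x - k) (by omega)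
        rw [show k + (x - k) = x by omega] at h3
        rw [h3]
        split_ifs <;> omega
      · rw [fix x h2]
        split_ifs <;> omega
  have hyinv : ∀ x, y⁻¹ x = y x := fun x =>
    y.injective (by rw [← Equiv.Perm.mul_apply, mul_inv_cancel, Equiv.Perm.one_apply, hinv])
  refine ⟨?_, hfun⟩
  ext ⟨i, j⟩
  simp only [rotheN, Set.mem_setOf_eq, hyinv j]
  rw [hfun i, hfun j]
  unfold gfun
  constructor
  · rintro ⟨h1, h2⟩
    split_ifs at h1 h2 <;> omega
  · rintro ⟨h1, h2⟩
    constructor <;> [skip; skip] <;> split_ifs <;> omega
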